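/- With c_i, c_j > 0 and the transformation p_j = c_j·p̂_j, v_{i,j} = v̂_{i,j}/c_i, r_{i,j} = c_j·r̂_{i,j}, m_{i,j} = c_j·m̂_{i,j}: a feasible matching μ̂ = μ is stable under generalized utilities û_{i,j}(p̂_j) = v̂_{i,j} - c_i c_j p̂_j (for p̂_j < m̂_{i,j}, else -∞) if and only if it is stable under standard utilities u_{i,j}(p_j) = v_{i,j} - p_j (for p_j < m_{i,j}, else -∞). Moreover û_i = c_i · u_i for each bidder i. -/

import Mathlib

open scoped Classical

noncomputable section

variable {I J : Type*}

/-- Generalized utility `u_{i,j}(p_j) = v_{i,j} - c_i · c_j · p_j` if `p_j < m_{i,j}`, and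
`-∞` otherwise. Standard utilities correspond to `c_i = c_j = 1`. -/
def gutil (v : I → J → ℝ) (m : I → J → EReal) (ci : I → ℝ) (cj : J → ℝ) (p : J → ℝ)
    (i : I) (j : J) : EReal :=
  if (p j : EReal) < m i j then ((v i j - ci i * cj j * p j : ℝ) : EReal) else ⊥

/-- Utility of bidder `i` under matching `μ` (dummy item `j0` gives utility 0), for an
abstract utility function `utilF`. -/
def gbidderU (utilF : (J → ℝ) → I → J → EReal) (j0 : J) (μ : I → J) (p : J → ℝ)
    (i : I) : EReal :=
  if μ i = j0 then 0 else utilF p i (μ i)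

/-- Feasibility for an abstract utility function: `μ` is a matching, utilities are
nonnegative, prices are nonnegative with the dummy item priced at `0`, and
`r_{i,j} ≤ p_j < m_{i,j}` on matched pairs. -/
def GFeasible (utilF : (J → ℝ) → I → J → EReal) (r : I → J → ℝ) (m : I → J → EReal)
    (j0 : J) (μ : I → J) (p : J → ℝ) : Prop :=
  (∀ i i', μ i = μ i' → μ i ≠ j0 → i = i') ∧
  (∀ i, 0 ≤ gbidderU utilF j0 μ p i) ∧
  p j0 = 0 ∧ (∀ j, 0 ≤ p j) ∧
  (∀ i, r i (μ i) ≤ p (μ i) ∧ (p (μ i) : EReal) < m i (μ i))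

/-- Stability: feasibility plus `u_i ≥ u_{i,j}(p_j)` for all bidder-item pairs. -/
def GStable (utilF : (J → ℝ) → I → J → EReal) (r : I → J → ℝ) (m : I → J → EReal)
    (j0 : J) (μ : I → J) (p : J → ℝ) : Prop :=
  GFeasible utilF r m j0 μ p ∧ ∀ i j, utilF p i j ≤ gbidderU utilF j0 μ p i

/-- Bidder optimality: stable, and every bidder weakly prefers it to every stable
matching. -/
def GBidderOptimal (utilF : (J → ℝ) → I → J → EReal) (r : I → J → ℝ)
    (m : I → J → EReal) (j0 : J) (μ : I → J) (p : J → ℝ) : Prop :=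
  GStable utilF r m j0 μ p ∧
    ∀ μ' p', GStable utilF r m j0 μ' p' →
      ∀ i, gbidderU utilF j0 μ' p' i ≤ gbidderU utilF j0 μ p i


lemma ereal_mul_strictMono {c : ℝ} (hc : 0 < c) :
    StrictMono (fun x : EReal => (c : EReal) * x) := by
  have h := EReal.strictMono_div_right_of_pos (b := ((c⁻¹ : ℝ) : EReal))
    (by exact_mod_cast inv_pos.2 hc) (EReal.coe_ne_top _)
  have : ∀ x : EReal, x / ((c⁻¹ : ℝ) : EReal) = (c : EReal) * x := by
    intro x
    rw [div_eq_mul_inv, ← EReal.coe_inv, inv_inv, EReal.mul_comm]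
  simpa only [this] using h

/-- a feasible matching `μ̂ = μ` is stable under generalized utilities
`v̂_{i,j} - c_i c_j p̂_j` (with data `(v̂, r̂, m̂)` and prices `p̂`) iff it is stable under
standard utilities with the transformed data `(v̂_{i,j}/c_i, c_j r̂_{i,j}, c_j m̂_{i,j})` and
prices `p_j = c_j p̂_j`; moreover `û_i = c_i · u_i` for every bidder. -/
theorem stable_transform (vh rh : I → J → ℝ) (mh : I → J → EReal)
    (ci : I → ℝ) (cj : J → ℝ) (hci : ∀ i, 0 < ci i) (hcj : ∀ j, 0 < cj j)
    (j0 : J) (μ : I → J) (ph : J → ℝ)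
    (hfeas : GFeasible (gutil vh mh ci cj) rh mh j0 μ ph) :
    (GStable (gutil vh mh ci cj) rh mh j0 μ ph ↔
      GStable
        (gutil (fun i j => vh i j / ci i) (fun i j => (cj j : EReal) * mh i j)
          (fun _ => 1) (fun _ => 1))
        (fun i j => cj j * rh i j) (fun i j => (cj j : EReal) * mh i j)
        j0 μ (fun j => cj j * ph j)) ∧
    (∀ i, gbidderU (gutil vh mh ci cj) j0 μ ph i =
      (ci i : EReal) *
        gbidderU
          (gutil (fun i j => vh i j / ci i) (fun i j => (cj j : EReal) * mh i j)
            (fun _ => 1) (fun _ => 1))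
          j0 μ (fun j => cj j * ph j) i) := by
  have hmul : ∀ (c : ℝ), 0 < c → ∀ x y : EReal, ((c : EReal) * x ≤ (c : EReal) * y ↔ x ≤ y) :=
    fun c hc x y => (ereal_mul_strictMono hc).le_iff_le
  have hmlt : ∀ (c : ℝ), 0 < c → ∀ x y : EReal, ((c : EReal) * x < (c : EReal) * y ↔ x < y) :=
    fun c hc x y => (ereal_mul_strictMono hc).lt_iff_lt
  set u2 := gutil (fun i j => vh i j / ci i) (fun i j => (cj j : EReal) * mh i j)
    (fun _ => 1) (fun _ => 1) with hu2
  have hgut : ∀ i j, gutil vh mh ci cj ph i j =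
      (ci i : EReal) * u2 (fun j => cj j * ph j) i j := by
    intro i j
    have hcond : ((cj j * ph j : ℝ) : EReal) < (cj j : EReal) * mh i j ↔
        (ph j : EReal) < mh i j := by
      rw [EReal.coe_mul]
      exact hmlt (cj j) (hcj j) _ _
    simp only [hu2, gutil, hcond]
    split
    · rw [← EReal.coe_mul]
      congr 1
      field_simp [(hci i).ne']
    · exact (EReal.coe_mul_bot_of_pos (hci i)).symm
  have hbid : ∀ i, gbidderU (gutil vh mh ci cj) j0 μ ph i =
      (ci i : EReal) * gbidderU u2 j0 μ (fun j => cj j * ph j) i := by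
    intro i
    simp only [gbidderU]
    split
    · simp
    · exact hgut i (μ i)
  refine ⟨?_, hbid⟩
  obtain ⟨hmatch, hnn, hp0, hpnn, hrm⟩ := hfeas
  have hfeas2 : GFeasible u2 (fun i j => cj j * rh i j)
      (fun i j => (cj j : EReal) * mh i j) j0 μ (fun j => cj j * ph j) := by
    refine ⟨hmatch, ?_, by simp [hp0], fun j => mul_nonneg (hcj j).le (hpnn j), ?_⟩
    · intro i
      have := hnn i
      rw [hbid i] at this
      have h0 : (ci i : EReal) * 0 = 0 := by simp
      rw [← h0] at this
      exact (hmul (ci i) (hci i) _ _).mp this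
    · intro i
      refine ⟨mul_le_mul_of_nonneg_left (hrm i).1 (hcj (μ i)).le, ?_⟩
      rw [EReal.coe_mul]
      exact (hmlt (cj (μ i)) (hcj (μ i)) _ _).mpr (hrm i).2
  constructor
  · rintro ⟨-, hst⟩
    refine ⟨hfeas2, fun i j => ?_⟩
    have := hst i j
    rw [hgut i j, hbid i] at this
    exact (hmul (ci i) (hci i) _ _).mp this
  · rintro ⟨-, hst⟩
    refine ⟨⟨hmatch, hnn, hp0, hpnn, hrm⟩, fun i j => ?_⟩
    rw [hgut i j, hbid i]
    exact (hmul (ci i) (hci i) _ _).mpr (hst i j)
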